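/- Let A be an (n+2)×n integer matrix and define the skew-symmetric (n+2)×(n+2) matrix M(A) = (m_{ij}) by m_{ij} = (−1)^{i+j} det(A_{R(i,j)}) for i < j, m_{ii} = 0, and m_{ij} = (−1)^{i+j+1} det(A_{R(i,j)}) for j < i, where R(i,j) ⊂ [n+2] is the complement of {i,j} and A_{R(i,j)} is the n×n submatrix of A with those rows. Then Aᵀ · M(A) = 0. -/

import Mathlib

lemma succAbove_val {m : ℕ} (p : Fin (m+1)) (x : Fin m) :
    (p.succAbove x).1 = if x.1 < p.1 then x.1 else x.1 + 1 := by
  rcases Nat.lt_or_ge x.1 p.1 with h | h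
  · rw [Fin.succAbove_of_castSucc_lt _ _ (by simpa [Fin.lt_def] using h), if_pos h]; rfl
  · rw [Fin.succAbove_of_le_castSucc _ _ (by simpa [Fin.le_def] using h), if_neg (by omega)]; rfl

lemma neg_one_pow_congr_mod_two {a b : ℕ} (h : a % 2 = b % 2) : ((-1:ℤ))^a = (-1)^b := by
  conv_lhs => rw [← Nat.div_add_mod a 2]
  conv_rhs => rw [← Nat.div_add_mod b 2]
  simp [pow_add, pow_mul, h]



/-- The strictly monotone embedding `Fin n → Fin (n+2)` whose image is the
complement `R(i,j)` of `{i, j}` (for `i < j`). -/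
def rowEmb {n : ℕ} (i j : Fin (n + 2)) (h : i < j) : Fin n → Fin (n + 2) :=
  j.succAbove ∘ Fin.succAbove ⟨i.1, by have := j.2; have := Fin.lt_def.mp h; omega⟩

/-- The skew-symmetric matrix `M(A)` of signed maximal minors of an
`(n+2) × n` matrix `A`: `m i j = (-1)^(i+j) det (A_{R(i,j)})` for `i < j`,
`m i i = 0`, and `m i j = (-1)^(i+j+1) det (A_{R(i,j)})` for `j < i`. -/
def minorMatrix {n : ℕ} (A : Matrix (Fin (n + 2)) (Fin n) ℤ) :
    Matrix (Fin (n + 2)) (Fin (n + 2)) ℤ :=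
  Matrix.of fun i j =>
    if h : i < j then (-1) ^ (i.1 + j.1) * (A.submatrix (rowEmb i j h) id).det
    else if h' : j < i then (-1) ^ (i.1 + j.1 + 1) * (A.submatrix (rowEmb j i h') id).det
    else 0

/-- For any `(n+2) × n` integer matrix `A`, the signed-minor matrix `M(A)`
satisfies `Aᵀ · M(A) = 0`. -/
lemma minor_entry {n : ℕ} (A : Matrix (Fin (n + 2)) (Fin n) ℤ) (j : Fin (n+2)) (r : Fin (n+1)) :
    minorMatrix A (j.succAbove r) j
      = (-1:ℤ)^(r.1+j.1) * (A.submatrix (j.succAbove ∘ r.succAbove) id).det := by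
  have hv : (j.succAbove r).1 = if r.1 < j.1 then r.1 else r.1 + 1 := succAbove_val j r
  rcases Nat.lt_or_ge r.1 j.1 with h | h
  · have hi : (j.succAbove r).1 = r.1 := by rw [hv, if_pos h]
    have hlt : j.succAbove r < j := by rw [Fin.lt_def, hi]; exact h
    have hre : rowEmb (j.succAbove r) j hlt = j.succAbove ∘ r.succAbove := by
      funext x
      apply Fin.ext
      simp only [rowEmb, Function.comp_apply, succAbove_val, hi]
      split_ifs <;> omega
    simp only [minorMatrix, Matrix.of_apply, dif_pos hlt, hre, hi]
  · have hi : (j.succAbove r).1 = r.1 + 1 := by rw [hv, if_neg (by omega)]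
    have hnlt : ¬ j.succAbove r < j := by rw [Fin.lt_def, hi]; omega
    have hlt : j < j.succAbove r := by rw [Fin.lt_def, hi]; omega
    have hre : rowEmb j (j.succAbove r) hlt = j.succAbove ∘ r.succAbove := by
      funext x
      apply Fin.ext
      simp only [rowEmb, Function.comp_apply, succAbove_val, hi]
      split_ifs <;> omega
    simp only [minorMatrix, Matrix.of_apply, dif_neg hnlt, dif_pos hlt, hre, hi]
    congr 1
    exact neg_one_pow_congr_mod_two (by omega)

theorem transpose_mul_minorMatrix (n : ℕ) (A : Matrix (Fin (n + 2)) (Fin n) ℤ) :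
    A.transpose * minorMatrix A = 0 := by
  ext k j
  rw [Matrix.mul_apply, Matrix.zero_apply]
  set D : Fin (n+1) → ℤ := fun r => (A.submatrix (j.succAbove ∘ r.succAbove) id).det with hD
  -- the auxiliary matrix with a repeated column
  set B : Matrix (Fin (n+1)) (Fin (n+1)) ℤ :=
    Matrix.of (fun r c => if hc : c.1 < n then A (j.succAbove r) ⟨c.1, hc⟩ else A (j.succAbove r) k)
    with hBdef
  have hB : B.det = 0 := by
    refine Matrix.det_zero_of_column_eq (i := ⟨k.1, by have := k.2; omega⟩) (j := Fin.last n)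
      (by simp [Fin.ext_iff]; have := k.2; omega) (fun r => ?_)
    simp only [hBdef, Matrix.of_apply, Fin.last]
    rw [dif_pos k.2, dif_neg (lt_irrefl n)]
  have hexp := Matrix.det_succ_column B (Fin.last n)
  rw [hB] at hexp
  have hterm : ∀ r : Fin (n+1),
      (-1:ℤ)^(r.1 + (Fin.last n).1) * B r (Fin.last n)
        * (B.submatrix r.succAbove (Fin.last n).succAbove).det
      = (-1:ℤ)^(r.1 + n) * (A (j.succAbove r) k * D r) := by
    intro r
    have h1 : B r (Fin.last n) = A (j.succAbove r) k := by
      simp only [hBdef, Matrix.of_apply, Fin.last]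
      rw [dif_neg (lt_irrefl n)]
    have h2 : B.submatrix r.succAbove (Fin.last n).succAbove
        = A.submatrix (j.succAbove ∘ r.succAbove) id := by
      ext x y
      simp only [Matrix.submatrix_apply, hBdef, Matrix.of_apply, Fin.succAbove_last,
        Function.comp_apply, id]
      rw [dif_pos (by exact y.2)]
      congr 1
    rw [h1, h2, Fin.val_last, hD]
    ring
  rw [Finset.sum_congr rfl (fun r _ => hterm r)] at hexp
  have hzero : ∑ r : Fin (n+1), (-1:ℤ)^(r.1 + n) * (A (j.succAbove r) k * D r) = 0 := hexp.symm
  have hsplit := Fin.sum_univ_succAbove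
    (fun i => A.transpose k i * minorMatrix A i j) j
  rw [hsplit]
  have hjj : minorMatrix A j j = 0 := by
    simp [minorMatrix]
  rw [hjj, mul_zero, zero_add]
  have : ∀ r : Fin (n+1),
      A.transpose k (j.succAbove r) * minorMatrix A (j.succAbove r) j
      = (-1:ℤ)^(j.1 + n) * ((-1:ℤ)^(r.1 + n) * (A (j.succAbove r) k * D r)) := by
    intro r
    rw [Matrix.transpose_apply, minor_entry A j r]
    have hs : (-1:ℤ)^(j.1 + n) * (-1:ℤ)^(r.1 + n) = (-1:ℤ)^(r.1 + j.1) := by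
      rw [← pow_add]
      exact neg_one_pow_congr_mod_two (by omega)
    calc A (j.succAbove r) k * ((-1:ℤ)^(r.1+j.1) * D r)
        = (-1:ℤ)^(r.1+j.1) * (A (j.succAbove r) k * D r) := by ring
      _ = ((-1:ℤ)^(j.1 + n) * (-1:ℤ)^(r.1 + n)) * (A (j.succAbove r) k * D r) := by rw [hs]
      _ = (-1:ℤ)^(j.1 + n) * ((-1:ℤ)^(r.1 + n) * (A (j.succAbove r) k * D r)) := by ring
  rw [Finset.sum_congr rfl (fun r _ => this r), ← Finset.mul_sum, hzero, mul_zero]
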